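/- Let μ > 0 and let f : [0,1] → ℝ be continuous. Then 𝓛ₙᴷ f converges to f uniformly on [0,1], i.e., sup_{x ∈ [0,1]} |𝓛ₙᴷ(f, x) − f(x)| → 0 as n → +∞. -/

import Mathlib

open MeasureTheory Filter Set

/-- The logarithmic weight `ln_μ(x) = ln(1+μ+x)`. -/
noncomputable def lnMu (μ x : ℝ) : ℝ := Real.log (1 + μ + x)

/-- The function `a_{n+1}(x)` from the paper. -/
noncomputable def aFun (μ : ℝ) (n : ℕ) (x : ℝ) : ℝ :=
  Real.log (1 + x / (((n : ℝ) + 1) * (1 + μ))) /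
    Real.log (1 + 1 / (((n : ℝ) + 1) * (1 + μ)))

/-- Bernstein basis polynomial `p_{n,k}(x) = C(n,k) x^k (1-x)^{n-k}`. -/
noncomputable def bern (n k : ℕ) (x : ℝ) : ℝ :=
  (n.choose k : ℝ) * x ^ k * (1 - x) ^ (n - k)

/-- The Kantorovich logarithmic operator `𝓛ₙᴷ(f,x)`. -/
noncomputable def LK (μ : ℝ) (n : ℕ) (f : ℝ → ℝ) (x : ℝ) : ℝ :=
  lnMu μ x * ∑ k ∈ Finset.range (n + 1),
    bern n k (aFun μ n x) * ((n : ℝ) + 1) *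
      ∫ t in ((k : ℝ) / ((n : ℝ) + 1))..(((k : ℝ) + 1) / ((n : ℝ) + 1)), f t / lnMu μ t

/-- `γ_n := max_{x ∈ [0,1]} |a_{n+1}(x) - x|`. -/
noncomputable def gammaN (μ : ℝ) (n : ℕ) : ℝ :=
  ⨆ x : Set.Icc (0 : ℝ) 1, |aFun μ n (x : ℝ) - (x : ℝ)|

/-- Unweighted L^p norm `(∫₀¹ |f|^p)^(1/p)` on [0,1]. -/
noncomputable def normP (p : ℝ) (f : ℝ → ℝ) : ℝ :=
  (∫ x in (0:ℝ)..1, |f x| ^ p) ^ (1 / p)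

/-- Weighted L^p norm `(∫₀¹ |f/ln_μ|^p)^(1/p)` on [0,1]. -/
noncomputable def normPMu (μ p : ℝ) (f : ℝ → ℝ) : ℝ :=
  (∫ x in (0:ℝ)..1, |f x / lnMu μ x| ^ p) ^ (1 / p)


open scoped unitInterval

lemma log_le_aux {c t : ℝ} (hc : 0 < c) (ht : 0 ≤ t) : Real.log (1 + t / c) ≤ t / c := by
  have := Real.log_le_sub_one_of_pos (show (0:ℝ) < 1 + t / c by positivity)
  linarith

lemma log_ge_aux {c t : ℝ} (hc : 0 < c) (ht : 0 ≤ t) :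
    t / (c + t) ≤ Real.log (1 + t / c) := by
  have h1 : (0:ℝ) < 1 + t / c := by positivity
  have h2 := Real.one_sub_inv_le_log_of_pos h1
  have he : 1 - (1 + t / c)⁻¹ = t / (c + t) := by
    rw [inv_eq_one_div]
    have hct : c + t ≠ 0 := by positivity
    field_simp
    ring
  rwa [he] at h2

lemma aFun_mem {μ : ℝ} (hμ : 0 < μ) (n : ℕ) {x : ℝ} (hx : x ∈ Icc (0:ℝ) 1) :
    aFun μ n x ∈ Icc (0:ℝ) 1 := by
  have hc : (0:ℝ) < ((n : ℝ) + 1) * (1 + μ) := by positivity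
  set c := ((n : ℝ) + 1) * (1 + μ) with hcdef
  rw [aFun, ← hcdef]
  have hden : 0 < Real.log (1 + 1 / c) := Real.log_pos (by
    have : (0:ℝ) < 1 / c := by positivity
    linarith)
  constructor
  · apply div_nonneg _ hden.le
    apply Real.log_nonneg
    have : (0:ℝ) ≤ x / c := div_nonneg hx.1 hc.le
    linarith
  · rw [div_le_one hden]
    apply Real.log_le_log (by nlinarith [hx.1, div_nonneg hx.1 hc.le])
    have : x / c ≤ 1 / c := by gcongr; exact hx.2
    linarith

lemma aFun_close {μ : ℝ} (hμ : 0 < μ) (n : ℕ) {x : ℝ} (hx : x ∈ Icc (0:ℝ) 1) :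
    |aFun μ n x - x| ≤ 1 / (((n : ℝ) + 1) * (1 + μ)) := by
  have hc : (0:ℝ) < ((n : ℝ) + 1) * (1 + μ) := by positivity
  set c := ((n : ℝ) + 1) * (1 + μ) with hcdef
  obtain ⟨hx0, hx1⟩ := hx
  have hden : 0 < Real.log (1 + 1 / c) := Real.log_pos (by
    have : (0:ℝ) < 1 / c := by positivity
    linarith)
  have hL1le : Real.log (1 + x / c) ≤ x / c := log_le_aux hc hx0
  have hL1ge : x / (c + x) ≤ Real.log (1 + x / c) := log_ge_aux hc hx0
  have hL2le : Real.log (1 + 1 / c) ≤ 1 / c := log_le_aux hc zero_le_one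
  have hL2ge : 1 / (c + 1) ≤ Real.log (1 + 1 / c) := log_ge_aux hc zero_le_one
  rw [aFun, ← hcdef, abs_sub_le_iff]
  constructor
  · rw [sub_le_iff_le_add, div_le_iff₀ hden]
    calc Real.log (1 + x / c) ≤ x / c := hL1le
      _ ≤ (1 / c + x) * (1 / (c + 1)) := by
          rw [div_le_iff₀ (by positivity)]
          have h1 : (1 / c + x) * (1 / (c + 1)) * c = (1 + x * c) / (c + 1) := by
            field_simp
          rw [h1, le_div_iff₀ (by positivity)]
          nlinarith
      _ ≤ (1 / c + x) * Real.log (1 + 1 / c) := by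
          apply mul_le_mul_of_nonneg_left hL2ge (by positivity)
  · rw [sub_le_iff_le_add]
    rcases le_or_gt x (1 / c) with h | h
    · have : 0 ≤ Real.log (1 + x / c) / Real.log (1 + 1 / c) :=
        div_nonneg (Real.log_nonneg (by nlinarith [div_nonneg hx0 hc.le])) hden.le
      linarith
    · rw [← sub_le_iff_le_add', le_div_iff₀ hden]
      calc (x - 1 / c) * Real.log (1 + 1 / c) ≤ (x - 1 / c) * (1 / c) := by
            apply mul_le_mul_of_nonneg_left hL2le (by linarith)
        _ ≤ x / (c + x) := by
            rw [mul_one_div, div_le_div_iff₀ (by positivity) (by positivity)]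
            nlinarith [mul_le_mul hx1 hx1 hx0 zero_le_one, one_div_mul_cancel hc.ne',
              mul_nonneg (show (0:ℝ) ≤ 1/c by positivity) hx0]
        _ ≤ Real.log (1 + x / c) := hL1ge

theorem stmt5 (μ : ℝ) (hμ : 0 < μ) (f : ℝ → ℝ)
    (hf : ContinuousOn f (Set.Icc 0 1)) :
    Tendsto (fun n : ℕ => ⨆ x : Set.Icc (0:ℝ) 1, |LK μ n f (x : ℝ) - f (x : ℝ)|)
      atTop (nhds 0) := by
  set g : ℝ → ℝ := fun t => f t / lnMu μ t with hg
  have hlnpos : ∀ x : ℝ, 0 ≤ x → 0 < lnMu μ x := fun x hx => Real.log_pos (by linarith)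
  have hlncont : ContinuousOn (lnMu μ) (Icc 0 1) := by
    intro x hx
    apply ContinuousAt.continuousWithinAt
    have h1 : (1 + μ + x) ≠ 0 := by nlinarith [hx.1]
    exact (Real.continuousAt_log h1).comp (by fun_prop)
  have hgc : ContinuousOn g (Icc 0 1) :=
    hf.div hlncont (fun x hx => (hlnpos x hx.1).ne')
  have hgu : UniformContinuousOn g (Icc 0 1) :=
    isCompact_Icc.uniformContinuousOn_of_continuous hgc
  set M : ℝ := Real.log (2 + μ) with hM
  have hMpos : 0 < M := Real.log_pos (by linarith)
  have hlnle : ∀ x ∈ Icc (0:ℝ) 1, lnMu μ x ≤ M := fun x hx =>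
    Real.log_le_log (by nlinarith [hx.1]) (by linarith [hx.2])
  set G : C(I, ℝ) := ⟨Set.restrict (Icc 0 1) g, hgc.restrict⟩ with hGdef
  rw [Metric.tendsto_nhds]
  intro ε hε
  set ε₁ : ℝ := ε / (6 * M) with hε₁def
  have hε₁ : 0 < ε₁ := by positivity
  obtain ⟨δ, hδ, hδε⟩ := Metric.uniformContinuousOn_iff_le.mp hgu ε₁ hε₁
  have hBev : ∀ᶠ n in atTop, dist (bernsteinApproximation n G) G < ε₁ :=
    Metric.tendsto_nhds.mp (bernsteinApproximation_uniform G) ε₁ hε₁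
  have h1nev : ∀ᶠ n : ℕ in atTop, (1 : ℝ) / n < δ :=
    tendsto_one_div_atTop_nhds_zero_nat.eventually (gt_mem_nhds hδ)
  filter_upwards [hBev, h1nev, eventually_ge_atTop 1] with n hBn h1n hn1
  have npos : (0:ℝ) < n := by exact_mod_cast hn1
  rw [Real.dist_eq, sub_zero]
  -- pointwise estimate
  have hpt : ∀ x ∈ Icc (0:ℝ) 1, |LK μ n f x - f x| ≤ ε / 2 := by
    intro x hx
    set y := aFun μ n x with hydef
    have hymem : y ∈ Icc (0:ℝ) 1 := aFun_mem hμ n hx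
    have hyδ : dist y x ≤ δ := by
      rw [Real.dist_eq]
      refine (aFun_close hμ n hx).trans ?_
      have h2 : (1:ℝ) / (((n : ℝ) + 1) * (1 + μ)) ≤ 1 / n := by
        apply one_div_le_one_div_of_le npos
        nlinarith
      linarith
    have hbernnn : ∀ k : ℕ, 0 ≤ bern n k y := by
      intro k
      have := @bernstein_nonneg n k ⟨y, hymem⟩
      rw [bernstein_apply] at this
      simpa [bern] using this
    have hsum1 : ∑ k ∈ Finset.range (n+1), bern n k y = 1 := by
      have hp := bernstein.probability n ⟨y, hymem⟩
      rw [← Fin.sum_univ_eq_sum_range]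
      rw [← hp]
      apply Finset.sum_congr rfl
      intro k _
      rw [bernstein_apply]
      rfl
    -- per-k Kantorovich bound
    have hker : ∀ k ∈ Finset.range (n+1),
        |((n:ℝ)+1) * (∫ t in ((k : ℝ) / ((n : ℝ) + 1))..(((k : ℝ) + 1) / ((n : ℝ) + 1)), g t)
          - g ((k:ℝ)/n)| ≤ ε₁ := by
      intro k hk
      have hkn : (k:ℝ) ≤ n := by
        have := Finset.mem_range.mp hk
        exact_mod_cast Nat.lt_succ_iff.mp this
      have hab : (k:ℝ)/((n:ℝ)+1) ≤ ((k:ℝ)+1)/((n:ℝ)+1) := by gcongr; linarith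
      have hsub : Set.uIcc ((k:ℝ)/((n:ℝ)+1)) (((k:ℝ)+1)/((n:ℝ)+1)) ⊆ Icc (0:ℝ) 1 := by
        rw [Set.uIcc_of_le hab]
        apply Set.Icc_subset_Icc
        · positivity
        · rw [div_le_one (by positivity)]; linarith
      have hint : IntervalIntegrable g volume ((k:ℝ)/((n:ℝ)+1)) (((k:ℝ)+1)/((n:ℝ)+1)) :=
        (hgc.mono hsub).intervalIntegrable
      have hlen : ((k:ℝ)+1)/((n:ℝ)+1) - (k:ℝ)/((n:ℝ)+1) = 1/((n:ℝ)+1) := by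
        rw [div_sub_div_same]; ring_nf
      have heq : ((n:ℝ)+1) * (∫ t in ((k : ℝ) / ((n : ℝ) + 1))..(((k : ℝ) + 1) / ((n : ℝ) + 1)), g t)
          - g ((k:ℝ)/n)
          = ((n:ℝ)+1) * ∫ t in ((k : ℝ) / ((n : ℝ) + 1))..(((k : ℝ) + 1) / ((n : ℝ) + 1)),
              (g t - g ((k:ℝ)/n)) := by
        rw [intervalIntegral.integral_sub hint intervalIntegrable_const,
          intervalIntegral.integral_const, smul_eq_mul, hlen, mul_sub]
        have : ((n:ℝ)+1) * (1/((n:ℝ)+1) * g ((k:ℝ)/n)) = g ((k:ℝ)/n) := by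
          field_simp
        rw [this]
      rw [heq, abs_mul, abs_of_pos (show (0:ℝ) < (n:ℝ)+1 by positivity)]
      have hbound : ∀ t ∈ Set.uIoc ((k:ℝ)/((n:ℝ)+1)) (((k:ℝ)+1)/((n:ℝ)+1)),
          ‖g t - g ((k:ℝ)/n)‖ ≤ ε₁ := by
        intro t ht
        rw [Set.uIoc_of_le hab] at ht
        have ht0 : (0:ℝ) ≤ t := le_trans (by positivity) ht.1.le
        have ht1 : t ≤ 1 := le_trans ht.2 (by rw [div_le_one (by positivity)]; linarith)
        have hk01 : (k:ℝ)/n ∈ Icc (0:ℝ) 1 := ⟨by positivity, by rw [div_le_one npos]; exact hkn⟩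
        have hdist : |t - (k:ℝ)/n| ≤ 1/(n:ℝ) := by
          rw [abs_sub_le_iff]
          constructor
          · have h1 : ((k:ℝ)+1)/((n:ℝ)+1) ≤ ((k:ℝ)+1)/(n:ℝ) := by
              apply div_le_div_of_nonneg_left (by positivity) npos (by linarith)
            have h2 : ((k:ℝ)+1)/(n:ℝ) = (k:ℝ)/n + 1/n := by rw [add_div]
            linarith [ht.2]
          · have h1 : (k:ℝ)/(n:ℝ) - (k:ℝ)/((n:ℝ)+1) ≤ 1/(n:ℝ) := by
              rw [div_sub_div _ _ npos.ne' (by positivity), div_le_div_iff₀ (by positivity) npos]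
              nlinarith
            linarith [ht.1.le]
        have := hδε t ⟨ht0, ht1⟩ ((k:ℝ)/n) hk01 (by rw [Real.dist_eq]; linarith)
        rwa [Real.dist_eq] at this
      calc ((n:ℝ)+1) * |∫ t in ((k : ℝ) / ((n : ℝ) + 1))..(((k : ℝ) + 1) / ((n : ℝ) + 1)),
              (g t - g ((k:ℝ)/n))|
          ≤ ((n:ℝ)+1) * (ε₁ * |(((k:ℝ)+1)/((n:ℝ)+1)) - ((k:ℝ)/((n:ℝ)+1))|) := by
            gcongr
            exact intervalIntegral.norm_integral_le_of_norm_le_const hbound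
        _ = ε₁ := by
            rw [hlen, abs_of_pos (by positivity)]
            field_simp
    -- Bernstein part
    have hBval : |(∑ k ∈ Finset.range (n+1), bern n k y * g ((k:ℝ)/n)) - g y| ≤ ε₁ := by
      have h1 : (∑ k ∈ Finset.range (n+1), bern n k y * g ((k:ℝ)/n))
          = bernsteinApproximation n G ⟨y, hymem⟩ := by
        rw [bernsteinApproximation.apply, ← Fin.sum_univ_eq_sum_range]
        apply Finset.sum_congr rfl
        intro k _
        have h2 : G (bernstein.z k) = g ((k:ℝ)/n) := rfl
        rw [h2, bernstein_apply, mul_comm]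
        exact mul_comm _ _
      have h3 : G ⟨y, hymem⟩ = g y := rfl
      rw [h1, ← h3]
      calc |bernsteinApproximation n G ⟨y, hymem⟩ - G ⟨y, hymem⟩|
          ≤ dist (bernsteinApproximation n G) G := by
            rw [← Real.dist_eq]
            exact ContinuousMap.dist_apply_le_dist _
        _ ≤ ε₁ := hBn.le
    have hgyx : |g y - g x| ≤ ε₁ := by
      have := hδε y hymem x hx hyδ
      rwa [Real.dist_eq] at this
    -- assemble
    have hfx : f x = lnMu μ x * g x := by
      rw [hg]
      dsimp only
      rw [mul_comm, div_mul_cancel₀ _ (hlnpos x hx.1).ne']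
    have hLKeq : LK μ n f x = lnMu μ x * ∑ k ∈ Finset.range (n+1),
        bern n k y * (((n:ℝ)+1) * ∫ t in ((k : ℝ) / ((n : ℝ) + 1))..(((k : ℝ) + 1) / ((n : ℝ) + 1)), g t) := by
      rw [LK]
      congr 1
      apply Finset.sum_congr rfl
      intro k _
      rw [mul_assoc]
    have hD : |(∑ k ∈ Finset.range (n+1),
        bern n k y * (((n:ℝ)+1) * ∫ t in ((k : ℝ) / ((n : ℝ) + 1))..(((k : ℝ) + 1) / ((n : ℝ) + 1)), g t)) - g x|
        ≤ 3 * ε₁ := by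
      have hdecomp : (∑ k ∈ Finset.range (n+1),
          bern n k y * (((n:ℝ)+1) * ∫ t in ((k : ℝ) / ((n : ℝ) + 1))..(((k : ℝ) + 1) / ((n : ℝ) + 1)), g t)) - g x
          = (∑ k ∈ Finset.range (n+1), bern n k y *
              (((n:ℝ)+1) * (∫ t in ((k : ℝ) / ((n : ℝ) + 1))..(((k : ℝ) + 1) / ((n : ℝ) + 1)), g t) - g ((k:ℝ)/n)))
            + ((∑ k ∈ Finset.range (n+1), bern n k y * g ((k:ℝ)/n)) - g y) + (g y - g x) := by
        simp only [mul_sub, Finset.sum_sub_distrib]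
        ring
      rw [hdecomp]
      refine (abs_add_three _ _ _).trans ?_
      have hA : |∑ k ∈ Finset.range (n+1), bern n k y *
          (((n:ℝ)+1) * (∫ t in ((k : ℝ) / ((n : ℝ) + 1))..(((k : ℝ) + 1) / ((n : ℝ) + 1)), g t) - g ((k:ℝ)/n))| ≤ ε₁ := by
        calc |∑ k ∈ Finset.range (n+1), bern n k y *
            (((n:ℝ)+1) * (∫ t in ((k : ℝ) / ((n : ℝ) + 1))..(((k : ℝ) + 1) / ((n : ℝ) + 1)), g t) - g ((k:ℝ)/n))|
            ≤ ∑ k ∈ Finset.range (n+1), |bern n k y *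
              (((n:ℝ)+1) * (∫ t in ((k : ℝ) / ((n : ℝ) + 1))..(((k : ℝ) + 1) / ((n : ℝ) + 1)), g t) - g ((k:ℝ)/n))| :=
              Finset.abs_sum_le_sum_abs _ _
          _ ≤ ∑ k ∈ Finset.range (n+1), bern n k y * ε₁ := by
              apply Finset.sum_le_sum
              intro k hk
              rw [abs_mul, abs_of_nonneg (hbernnn k)]
              exact mul_le_mul_of_nonneg_left (hker k hk) (hbernnn k)
          _ = ε₁ := by rw [← Finset.sum_mul, hsum1, one_mul]
      linarith [hA, hBval, hgyx]
    calc |LK μ n f x - f x| = lnMu μ x * |(∑ k ∈ Finset.range (n+1),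
          bern n k y * (((n:ℝ)+1) * ∫ t in ((k : ℝ) / ((n : ℝ) + 1))..(((k : ℝ) + 1) / ((n : ℝ) + 1)), g t)) - g x| := by
          rw [hLKeq, hfx, ← mul_sub, abs_mul, abs_of_pos (hlnpos x hx.1)]
      _ ≤ M * (3 * ε₁) := mul_le_mul (hlnle x hx) hD (abs_nonneg _) hMpos.le
      _ = ε / 2 := by
          rw [hε₁def]
          have hM0 : M ≠ 0 := hMpos.ne'
          field_simp
          ring
  -- conclude for the sup
  have hbdd : BddAbove (Set.range fun x : Icc (0:ℝ) 1 => |LK μ n f (x:ℝ) - f (x:ℝ)|) := by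
    refine ⟨ε/2, ?_⟩
    rintro _ ⟨x, rfl⟩
    exact hpt x x.2
  have hsup_le : (⨆ x : Icc (0:ℝ) 1, |LK μ n f (x:ℝ) - f (x:ℝ)|) ≤ ε / 2 :=
    ciSup_le fun x => hpt x x.2
  have hsup_ge : 0 ≤ ⨆ x : Icc (0:ℝ) 1, |LK μ n f (x:ℝ) - f (x:ℝ)| :=
    le_trans (abs_nonneg _) (le_ciSup hbdd (⟨0, by norm_num⟩ : Icc (0:ℝ) 1))
  rw [abs_of_nonneg hsup_ge]
  linarith
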